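/- Let J: R^2 → [0,∞) be integrable, radially symmetric (J(y) = g(|y|)), let m': R → R be bounded measurable, r ∈ R, let A be a symmetric 2×2 real matrix with eigenvector ν (unit length) of eigenvalue 0 and trace k. Then ∫_{R^2} J(y) m'(r + ν·y) (y^T A y) dy = k ∫_{R^2} J(ŷ) m'(r + ŷ1) ŷ2^2 dŷ. -/

import Mathlib

open MeasureTheory
open scoped RealInnerProductSpace

/-- Reduction of the quadratic-form integral: for a radially symmetric kernel
and a symmetric 2×2 matrix A with unit null eigenvector ν and trace k,
∫ J(y) m'(r + ⟪ν,y⟫) (yᵀ A y) dy = k ∫ J(ŷ) m'(r + ŷ₁) ŷ₂² dŷ. -/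
theorem heis_stmt_11 (J : EuclideanSpace ℝ (Fin 2) → ℝ) (g : ℝ → ℝ)
    (hJ0 : ∀ y, 0 ≤ J y) (hJrad : ∀ y, J y = g ‖y‖) (hJint : Integrable J)
    (m' : ℝ → ℝ) (hm'meas : Measurable m') (C : ℝ) (hm'bd : ∀ s, |m' s| ≤ C)
    (r : ℝ) (A : Matrix (Fin 2) (Fin 2) ℝ) (hA : A.IsSymm)
    (ν : EuclideanSpace ℝ (Fin 2)) (hν : ‖ν‖ = 1)
    (hAν : A.mulVec (fun i => ν i) = 0) (k : ℝ) (hk : A.trace = k) :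
    ∫ y : EuclideanSpace ℝ (Fin 2),
        J y * m' (r + ⟪ν, y⟫) * dotProduct (fun i => y i)
          (A.mulVec fun i => y i)
      = k * ∫ y : EuclideanSpace ℝ (Fin 2), J y * m' (r + y 0) * (y 1) ^ 2 := by
  set a := ν 0 with ha
  set b := ν 1 with hb
  -- norm condition
  have hab : a * a + b * b = 1 := by
    have h1 : ⟪ν, ν⟫ = 1 := by
      rw [real_inner_self_eq_norm_sq, hν]; norm_num
    simp only [PiLp.inner_apply, Fin.sum_univ_two, RCLike.inner_apply, conj_trivial] at h1
    rw [ha, hb]; linarith [h1]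
  -- eigenvector equations
  have E1 : A 0 0 * a + A 0 1 * b = 0 := by
    have := congrFun hAν 0
    simpa [Matrix.mulVec, dotProduct, Fin.sum_univ_two] using this
  have hA10 : A 1 0 = A 0 1 := by
    have := congrFun (congrFun hA.eq 1) 0
    simpa [Matrix.transpose_apply] using this.symm
  have E2 : A 0 1 * a + A 1 1 * b = 0 := by
    have := congrFun hAν 1
    simpa [Matrix.mulVec, dotProduct, Fin.sum_univ_two, hA10] using this
  have E3 : A 0 0 + A 1 1 = k := by
    simpa [Matrix.trace, Matrix.diag, Fin.sum_univ_two] using hk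
  -- entries of A
  have hA00 : A 0 0 = k * b ^ 2 := by
    linear_combination a * E1 - b * E2 + b ^ 2 * E3 - A 0 0 * hab
  have hA11 : A 1 1 = k * a ^ 2 := by
    linear_combination -a * E1 + b * E2 + a ^ 2 * E3 - A 1 1 * hab
  have hA01 : A 0 1 = -(k * a * b) := by
    linear_combination b * E1 + a * E2 - a * b * E3 - A 0 1 * hab
  -- the orthogonal direction
  set w : EuclideanSpace ℝ (Fin 2) := !₂[-b, a] with hw
  have hw0 : w 0 = -b := rfl
  have hw1 : w 1 = a := rfl
  -- quadratic form pointwise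
  have hquad : ∀ y : EuclideanSpace ℝ (Fin 2),
      dotProduct (fun i => y i) (A.mulVec fun i => y i)
        = k * ⟪w, y⟫ ^ 2 := by
    intro y
    simp only [dotProduct, Matrix.mulVec, Fin.sum_univ_two, PiLp.inner_apply,
      RCLike.inner_apply, conj_trivial, hw0, hw1, hA00, hA01, hA10, hA11]
    ring
  -- orthonormal basis {ν, w}
  have hon : Orthonormal ℝ ![ν, w] := by
    rw [orthonormal_iff_ite]
    intro i j
    fin_cases i <;> fin_cases j <;>
      simp [PiLp.inner_apply, Fin.sum_univ_two, hw0, hw1] <;>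
      [exact Or.inl hν; ring; ring; (left; rw [EuclideanSpace.norm_eq, Fin.sum_univ_two, hw0, hw1]; simp only [Real.norm_eq_abs, sq_abs]; rw [Real.sqrt_eq_one])] <;> linarith [hab]
  have hcard : Fintype.card (Fin 2) = Module.finrank ℝ (EuclideanSpace ℝ (Fin 2)) := by
    simp [finrank_euclideanSpace_fin]
  let Bb := basisOfOrthonormalOfCardEqFinrank hon hcard
  have hBb : ⇑Bb = ![ν, w] := coe_basisOfOrthonormalOfCardEqFinrank hon hcard
  let B : OrthonormalBasis (Fin 2) ℝ (EuclideanSpace ℝ (Fin 2)) :=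
    Bb.toOrthonormalBasis (by rwa [hBb])
  have hB : ⇑B = ![ν, w] := by
    rw [Module.Basis.coe_toOrthonormalBasis, hBb]
  have hS : MeasurePreserving B.repr.symm volume volume :=
    B.measurePreserving_repr_symm
  -- change of variables
  have hchg : ∀ x : EuclideanSpace ℝ (Fin 2),
      (J (B.repr.symm x) * m' (r + ⟪ν, B.repr.symm x⟫) * ⟪w, B.repr.symm x⟫ ^ 2)
        = J x * m' (r + x 0) * (x 1) ^ 2 := by
    intro x
    have hJx : J (B.repr.symm x) = J x := by
      rw [hJrad, hJrad, B.repr.symm.norm_map]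
    have hν' : ⟪ν, B.repr.symm x⟫ = x 0 := by
      have := B.repr_apply_apply (B.repr.symm x) 0
      rw [LinearIsometryEquiv.apply_symm_apply, hB] at this
      simpa using this.symm
    have hw' : ⟪w, B.repr.symm x⟫ = x 1 := by
      have := B.repr_apply_apply (B.repr.symm x) 1
      rw [LinearIsometryEquiv.apply_symm_apply, hB] at this
      simpa using this.symm
    rw [hJx, hν', hw']
  calc ∫ y : EuclideanSpace ℝ (Fin 2),
        J y * m' (r + ⟪ν, y⟫) * dotProduct (fun i => y i)
          (A.mulVec fun i => y i)
      = ∫ y : EuclideanSpace ℝ (Fin 2),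
          k * (J y * m' (r + ⟪ν, y⟫) * ⟪w, y⟫ ^ 2) := by
        congr 1; funext y; rw [hquad y]; ring
    _ = k * ∫ y : EuclideanSpace ℝ (Fin 2),
          J y * m' (r + ⟪ν, y⟫) * ⟪w, y⟫ ^ 2 := integral_const_mul k _
    _ = k * ∫ x : EuclideanSpace ℝ (Fin 2), J x * m' (r + x 0) * (x 1) ^ 2 := by
        congr 1
        rw [← hS.integral_comp (B.repr.symm.toHomeomorph.measurableEmbedding)
          (fun y => J y * m' (r + ⟪ν, y⟫) * ⟪w, y⟫ ^ 2)]
        exact integral_congr_ae (Filter.Eventually.of_forall hchg)
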